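/- Let B be a Rota–Baxter operator of weight λ on a Lie algebra g over a field. On the direct product Lie algebra g × g (componentwise bracket), the map B̂(u,x) := (Bu − (B+λ·id)x, Bu − (B+λ·id)x) is a Rota–Baxter operator of weight λ. -/
import Mathlib


/-- The componentwise bracket on the direct product Lie algebra `g × g`. -/
def prodBracket {K : Type*} [Field K] {g : Type*} [LieRing g] [LieAlgebra K g]
    (a b : g × g) : g × g :=
  (⁅a.1, b.1⁆, ⁅a.2, b.2⁆)

lemma key {K : Type*} [Field K] {g : Type*} [LieRing g] [LieAlgebra K g]
    (lam : K) (B : g →ₗ[K] g)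
    (hB : ∀ x y : g, ⁅B x, B y⁆ = B (⁅B x, y⁆ + ⁅x, B y⁆ + lam • ⁅x, y⁆))
    (u x v y : g) :
    ⁅B u - (B x + lam • x), B v - (B y + lam • y)⁆ =
      B (⁅B u - (B x + lam • x), v⁆ + ⁅u, B v - (B y + lam • y)⁆ + lam • ⁅u, v⁆) -
        (B (⁅B u - (B x + lam • x), y⁆ + ⁅x, B v - (B y + lam • y)⁆ + lam • ⁅x, y⁆) +
          lam • (⁅B u - (B x + lam • x), y⁆ + ⁅x, B v - (B y + lam • y)⁆ + lam • ⁅x, y⁆)) := by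
  simp only [lie_sub, sub_lie, lie_add, add_lie, lie_smul, smul_lie, map_add, map_sub, map_smul,
    smul_add, smul_sub, hB]
  module

/-- If `B` is a Rota–Baxter operator of weight `lam` on a Lie algebra `g`,
then `B̂(u,x) := (Bu − (B+lam·id)x, Bu − (B+lam·id)x)` is a Rota–Baxter operator of weight
`lam` on the direct product Lie algebra `g × g` with the componentwise bracket. -/
theorem stmt5 (K g : Type*) [Field K] [LieRing g] [LieAlgebra K g]
    (lam : K) (B : g →ₗ[K] g)
    (hB : ∀ x y : g, ⁅B x, B y⁆ = B (⁅B x, y⁆ + ⁅x, B y⁆ + lam • ⁅x, y⁆))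
    (Bhat : g × g → g × g)
    (hBhat : ∀ a : g × g, Bhat a = (B a.1 - (B a.2 + lam • a.2), B a.1 - (B a.2 + lam • a.2))) :
    ∀ a b : g × g,
      prodBracket (K := K) (Bhat a) (Bhat b) =
        Bhat (prodBracket (K := K) (Bhat a) b + prodBracket (K := K) a (Bhat b) +
          lam • prodBracket (K := K) a b) := by
  rintro ⟨u, x⟩ ⟨v, y⟩
  simp only [hBhat, prodBracket, Prod.smul_mk, Prod.mk_add_mk, Prod.mk.injEq]
  constructor <;> exact key lam B hB u x v y
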